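/- Let E be a real Hilbert space and let K, γ : E → E be continuously differentiable maps with K(0) = 0, γ(0) = 0, and with γ'(u) self-adjoint for every u ∈ E (so γ is a gradient function). Then ⟨γ(u), K(u)⟩ = 0 for all u ∈ E if and only if γ'(u)[K(u)] + (K'(u))*[γ(u)] = 0 for all u ∈ E. (This is the time-independent form of the equivalence: the potential of γ is a conserved quantity of the autonomous evolution equation u_t = K(u) if and only if γ is a conserved covariant of it.) -/

import Mathlib

section Aux

variable {E : Type*} [NormedAddCommGroup E] [InnerProductSpace ℝ E] [CompleteSpace E]

private lemma aux_hasFDerivAt (K γ : E → E) (hK : ContDiff ℝ 1 K) (hγ : ContDiff ℝ 1 γ)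
    (hself : ∀ u : E, ContinuousLinearMap.adjoint (fderiv ℝ γ u) = fderiv ℝ γ u) (u : E) :
    HasFDerivAt (fun v => (inner ℝ (γ v) (K v) : ℝ))
      ((innerSL ℝ (fderiv ℝ γ u (K u) + ContinuousLinearMap.adjoint (fderiv ℝ K u) (γ u)))) u := by
  have hKd : HasFDerivAt K (fderiv ℝ K u) u :=
    (hK.differentiable one_ne_zero u).hasFDerivAt
  have hγd : HasFDerivAt γ (fderiv ℝ γ u) u :=
    (hγ.differentiable one_ne_zero u).hasFDerivAt
  have h := hγd.inner ℝ hKd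
  refine h.congr_fderiv ?_
  symm
  ext h'
  simp only [innerSL_apply_apply, ContinuousLinearMap.coe_comp', Function.comp_apply,
    ContinuousLinearMap.prod_apply, fderivInnerCLM_apply, inner_add_left]
  rw [ContinuousLinearMap.adjoint_inner_left]
  have : (inner ℝ (fderiv ℝ γ u (K u)) h' : ℝ) = inner ℝ (fderiv ℝ γ u h') (K u) := by
    rw [← ContinuousLinearMap.adjoint_inner_right (fderiv ℝ γ u) h' (K u), hself,
      real_inner_comm]
  rw [this]
  ring

end Aux

/-- Time-independent form of the equivalence between conserved quantities and conserved
covariants: for `C¹` maps `K, γ : E → E` with `K(0) = 0`, `γ(0) = 0` and `γ'(u)`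
self-adjoint for every `u` (so `γ` is a gradient function), one has
`⟨γ(u), K(u)⟩ = 0` for all `u` iff `γ'(u)[K(u)] + K'(u)*[γ(u)] = 0` for all `u`. -/
theorem conserved_iff_conservedCovariant {E : Type*} [NormedAddCommGroup E]
    [InnerProductSpace ℝ E] [CompleteSpace E]
    (K γ : E → E) (hK : ContDiff ℝ 1 K) (hγ : ContDiff ℝ 1 γ)
    (hK0 : K 0 = 0) (hγ0 : γ 0 = 0)
    (hself : ∀ u : E, ContinuousLinearMap.adjoint (fderiv ℝ γ u) = fderiv ℝ γ u) :
    (∀ u : E, (inner ℝ (γ u) (K u) : ℝ) = 0) ↔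
      (∀ u : E, fderiv ℝ γ u (K u) + ContinuousLinearMap.adjoint (fderiv ℝ K u) (γ u) = 0) := by
  constructor
  · intro hcons u
    have hd := aux_hasFDerivAt K γ hK hγ hself u
    have hconst : HasFDerivAt (fun v => (inner ℝ (γ v) (K v) : ℝ)) (0 : E →L[ℝ] ℝ) u := by
      have : (fun v => (inner ℝ (γ v) (K v) : ℝ)) = fun _ => (0 : ℝ) := funext hcons
      rw [this]; exact hasFDerivAt_const 0 u
    have := hd.unique hconst
    have h0 : (inner ℝ (fderiv ℝ γ u (K u) + ContinuousLinearMap.adjoint (fderiv ℝ K u) (γ u))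
        (fderiv ℝ γ u (K u) + ContinuousLinearMap.adjoint (fderiv ℝ K u) (γ u)) : ℝ) = 0 := by
      have := congrArg (fun L : E →L[ℝ] ℝ =>
        L (fderiv ℝ γ u (K u) + ContinuousLinearMap.adjoint (fderiv ℝ K u) (γ u))) this
      simp only [innerSL_apply_apply, ContinuousLinearMap.zero_apply, real_inner_comm] at this
      exact this
    exact inner_self_eq_zero.mp h0
  · intro hcov u
    have hzero : ∀ v : E, fderiv ℝ (fun w => (inner ℝ (γ w) (K w) : ℝ)) v = 0 := by
      intro v
      have hd := aux_hasFDerivAt K γ hK hγ hself v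
      rw [hd.fderiv, hcov v]
      ext h'
      simp
    have hdiff : Differentiable ℝ (fun w => (inner ℝ (γ w) (K w) : ℝ)) := fun v =>
      (aux_hasFDerivAt K γ hK hγ hself v).differentiableAt
    have hconst := is_const_of_fderiv_eq_zero hdiff hzero u 0
    rw [hconst, hK0, inner_zero_right]
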